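/- arXiv:2010.07728 — 4 statements merged into one kernel-verified Lean document; each statement's English description precedes it below -/
import Mathlib

section
/- Let J ∈ Sp(2n, ℝ) be a matrix with J² = -𝟙 such that Ω₀J is positive definite, where Ω₀ is the standard symplectic matrix. Then there exists P ∈ Sp(2n, ℝ) conjugating J to -Ω₀; in fact P = (Ω₀J)^{1/2} satisfies P J P⁻¹ = -Ω₀. -/
open Matrix

/-- The standard symplectic matrix Ω₀ = ((0, 1), (-1, 0)). -/
noncomputable def Omega0 (n : ℕ) : Matrix (Fin n ⊕ Fin n) (Fin n ⊕ Fin n) ℝ :=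
  Matrix.fromBlocks 0 1 (-1) 0

/-- The square root of a positive semidefinite matrix, as defined in Mathlib of December 2024
(removed since), specialised to real matrices (the only case used here). -/
noncomputable def Matrix.PosSemidef.sqrt {n : Type*} [Fintype n] [DecidableEq n]
    {A : Matrix n n ℝ} (hA : Matrix.PosSemidef A) : Matrix n n ℝ :=
  hA.1.eigenvectorUnitary.1 * diagonal ((↑) ∘ (√·) ∘ hA.1.eigenvalues) *
  (star hA.1.eigenvectorUnitary : Matrix n n ℝ)

lemma Matrix.PosSemidef.posSemidef_sqrt {n : Type*} [Fintype n] [DecidableEq n]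
    {A : Matrix n n ℝ} (hA : Matrix.PosSemidef A) : hA.sqrt.PosSemidef := by
  unfold Matrix.PosSemidef.sqrt
  have hD : (diagonal ((↑) ∘ (√·) ∘ hA.1.eigenvalues) : Matrix n n ℝ).PosSemidef :=
    PosSemidef.diagonal (fun i => by simp [Real.sqrt_nonneg])
  have := hD.mul_mul_conjTranspose_same (hA.1.eigenvectorUnitary : Matrix n n ℝ)
  simpa [Unitary.coe_star, Matrix.star_eq_conjTranspose] using this

lemma Matrix.PosSemidef.sqrt_mul_self {n : Type*} [Fintype n] [DecidableEq n]
    {A : Matrix n n ℝ} (hA : Matrix.PosSemidef A) : hA.sqrt * hA.sqrt = A := by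
  unfold Matrix.PosSemidef.sqrt
  have hU : (star hA.1.eigenvectorUnitary : Matrix n n ℝ) * hA.1.eigenvectorUnitary.1 = 1 :=
    Unitary.coe_star_mul_self _
  calc _ = hA.1.eigenvectorUnitary.1 * (diagonal ((↑) ∘ (√·) ∘ hA.1.eigenvalues) *
        ((star hA.1.eigenvectorUnitary : Matrix n n ℝ) * hA.1.eigenvectorUnitary.1) *
        diagonal ((↑) ∘ (√·) ∘ hA.1.eigenvalues)) *
        (star hA.1.eigenvectorUnitary : Matrix n n ℝ) := by simp only [mul_assoc]
    _ = hA.1.eigenvectorUnitary.1 * diagonal (RCLike.ofReal ∘ hA.1.eigenvalues) *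
        (star hA.1.eigenvectorUnitary : Matrix n n ℝ) := by
      rw [hU, mul_one, diagonal_mul_diagonal]
      congr 2
      ext i j
      simp [diagonal_apply, Real.mul_self_sqrt (hA.eigenvalues_nonneg i)]
    _ = A := by
      exact hA.1.spectral_theorem.symm

open scoped MatrixOrder in
lemma psd_eq_of_sq_eq_sq' {n : Type*} [Fintype n] [DecidableEq n]
    {A B : Matrix n n ℝ} (hA : A.PosSemidef) (hB : B.PosSemidef) (h : A ^ 2 = B ^ 2) : A = B :=
  (CFC.sq_eq_sq_iff A B hA.nonneg hB.nonneg).mp h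

/-- If J ∈ Sp(2n,ℝ), J² = -1 and Ω₀J is positive definite, then
P = (Ω₀J)^{1/2} is symplectic and conjugates J to -Ω₀. -/
theorem stmt0 (n : ℕ) (J : Matrix (Fin n ⊕ Fin n) (Fin n ⊕ Fin n) ℝ)
    (hsymp : Jᵀ * Omega0 n * J = Omega0 n) (hJ2 : J * J = -1)
    (hpos : (Omega0 n * J).PosDef) :
    ∃ P : Matrix (Fin n ⊕ Fin n) (Fin n ⊕ Fin n) ℝ,
      P = hpos.posSemidef.sqrt ∧
      Pᵀ * Omega0 n * P = Omega0 n ∧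
      P * J * P⁻¹ = -(Omega0 n) := by
  classical
  set Ω : Matrix (Fin n ⊕ Fin n) (Fin n ⊕ Fin n) ℝ := Omega0 n with hΩdef
  have hΩ2 : Ω * Ω = -1 := by
    show Omega0 n * Omega0 n = -1
    rw [Omega0, Matrix.fromBlocks_multiply]
    simp [← Matrix.fromBlocks_one, Matrix.fromBlocks_neg]
  have hΩT : Ωᵀ = -Ω := by
    show (Omega0 n)ᵀ = -(Omega0 n)
    rw [Omega0, Matrix.fromBlocks_transpose]
    simp [Matrix.fromBlocks_neg]
  set P := hpos.posSemidef.sqrt with hPdef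
  have hPpsd : P.PosSemidef := hpos.posSemidef.posSemidef_sqrt
  have hPP : P * P = Ω * J := hpos.posSemidef.sqrt_mul_self
  have hPT : Pᵀ = P := by
    rw [← Matrix.conjTranspose_eq_transpose_of_trivial]; exact hPpsd.1
  -- basic inverses
  have hMN : (Ω * J) * (J * Ω) = 1 := by
    calc (Ω * J) * (J * Ω) = Ω * ((J * J) * Ω) := by
          rw [mul_assoc, ← mul_assoc J J Ω]
      _ = 1 := by rw [hJ2]; simp [hΩ2]
  have hNM : (J * Ω) * (Ω * J) = 1 := by
    calc (J * Ω) * (Ω * J) = J * ((Ω * Ω) * J) := by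
          rw [mul_assoc, ← mul_assoc Ω Ω J]
      _ = 1 := by rw [hΩ2]; simp [hJ2]
  -- P commutes with Ω*J and J*Ω
  have hPM : P * (Ω * J) = (Ω * J) * P := by
    calc P * (Ω * J) = P * (P * P) := by rw [hPP]
      _ = (P * P) * P := by rw [mul_assoc]
      _ = (Ω * J) * P := by rw [hPP]
  have hPN : P * (J * Ω) = (J * Ω) * P := by
    have h := congrArg (fun X => (J * Ω) * X * (J * Ω)) hPM
    calc P * (J * Ω) = ((J * Ω) * (Ω * J)) * (P * (J * Ω)) := by rw [hNM, one_mul]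
      _ = (J * Ω) * ((Ω * J) * P) * (J * Ω) := by
          simp only [mul_assoc]
      _ = (J * Ω) * (P * (Ω * J)) * (J * Ω) := by rw [hPM]
      _ = (J * Ω) * P * ((Ω * J) * (J * Ω)) := by simp only [mul_assoc]
      _ = (J * Ω) * P := by rw [hMN, mul_one]
  -- the candidate inverse square root
  set Q : Matrix (Fin n ⊕ Fin n) (Fin n ⊕ Fin n) ℝ := -(Ω * P * Ω) with hQdef
  have hQT : Qᵀ = Q := by
    rw [hQdef, Matrix.transpose_neg, Matrix.transpose_mul, Matrix.transpose_mul, hΩT, hPT]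
    simp [mul_assoc]
  have hQH : Q.IsHermitian := by
    rw [Matrix.IsHermitian, Matrix.conjTranspose_eq_transpose_of_trivial, hQT]
  have hQQ : Q * Q = J * Ω := by
    rw [hQdef]
    calc -(Ω * P * Ω) * -(Ω * P * Ω) = Ω * P * ((Ω * Ω) * (P * Ω)) := by
          simp only [neg_mul, mul_neg, neg_neg, mul_assoc]
      _ = -(Ω * (P * P) * Ω) := by rw [hΩ2]; simp only [neg_mul, mul_neg, one_mul, mul_assoc]
      _ = -(Ω * (Ω * J) * Ω) := by rw [hPP]
      _ = -((Ω * Ω) * (J * Ω)) := by simp only [mul_assoc]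
      _ = J * Ω := by rw [hΩ2]; simp
  -- Q is positive semidefinite via eigenvalues
  have hΩQ : Ω * Q = P * Ω := by
    rw [hQdef]
    calc Ω * -(Ω * P * Ω) = -((Ω * Ω) * (P * Ω)) := by simp only [mul_neg, mul_assoc]
      _ = P * Ω := by rw [hΩ2]; simp
  have hQpsd : Q.PosSemidef := by
    refine hQH.posSemidef_iff_eigenvalues_nonneg.mpr fun i => ?_
    set v : (Fin n ⊕ Fin n) → ℝ := ⇑(hQH.eigenvectorBasis i) with hv
    have hev : Q *ᵥ v = hQH.eigenvalues i • v := hQH.mulVec_eigenvectorBasis i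
    have hvne : v ≠ 0 := by
      intro h
      exact hQH.eigenvectorBasis.orthonormal.ne_zero i (by ext j; exact congrFun h j)
    set w : (Fin n ⊕ Fin n) → ℝ := Ω *ᵥ v with hw
    have hPw : P *ᵥ w = hQH.eigenvalues i • w := by
      calc P *ᵥ w = (P * Ω) *ᵥ v := by rw [hw, mulVec_mulVec]
        _ = (Ω * Q) *ᵥ v := by rw [hΩQ]
        _ = Ω *ᵥ (Q *ᵥ v) := by rw [mulVec_mulVec]
        _ = Ω *ᵥ (hQH.eigenvalues i • v) := by rw [hev]
        _ = hQH.eigenvalues i • w := by rw [mulVec_smul, hw]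
    have hwne : w ≠ 0 := by
      intro h
      apply hvne
      have : (Ω * Ω) *ᵥ v = 0 := by rw [← mulVec_mulVec, ← hw, h, mulVec_zero]
      rw [hΩ2, neg_mulVec, one_mulVec, neg_eq_zero] at this
      exact this
    have h1 : (0:ℝ) ≤ w ⬝ᵥ (P *ᵥ w) := by simpa using hPpsd.dotProduct_mulVec_nonneg w
    rw [hPw, dotProduct_smul, smul_eq_mul] at h1
    have h2 : (0:ℝ) < w ⬝ᵥ w := by
      rcases lt_or_eq_of_le (Finset.sum_nonneg fun j _ => mul_self_nonneg (w j) :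
          (0:ℝ) ≤ w ⬝ᵥ w) with h | h
      · exact h
      · exact absurd (dotProduct_self_eq_zero.mp h.symm) hwne
    exact (mul_nonneg_iff_of_pos_right h2).mp h1
  -- P is invertible
  have hdetM : IsUnit (Ω * J).det := by
    have h : (Ω * J).det * (J * Ω).det = 1 := by rw [← det_mul, hMN, det_one]
    exact IsUnit.of_mul_eq_one _ h
  have hdetP : IsUnit P.det := by
    have h : P.det * P.det = (Ω * J).det := by rw [← det_mul, hPP]
    exact isUnit_of_mul_isUnit_left (h ▸ hdetM)
  have hPinv1 : P * P⁻¹ = 1 := Matrix.mul_nonsing_inv P hdetP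
  have hPinv2 : P⁻¹ * P = 1 := Matrix.nonsing_inv_mul P hdetP
  -- P⁻¹ is positive semidefinite
  have hPinvT : (P⁻¹)ᵀ = P⁻¹ := by rw [Matrix.transpose_nonsing_inv, hPT]
  have hPinvPsd : (P⁻¹).PosSemidef := by
    refine .of_dotProduct_mulVec_nonneg ?_ ?_
    · rw [Matrix.IsHermitian, Matrix.conjTranspose_eq_transpose_of_trivial, hPinvT]
    · intro x
      have hx : P *ᵥ (P⁻¹ *ᵥ x) = x := by rw [mulVec_mulVec, hPinv1, one_mulVec]
      have h0 : (0:ℝ) ≤ (P⁻¹ *ᵥ x) ⬝ᵥ (P *ᵥ (P⁻¹ *ᵥ x)) := by simpa using hPpsd.dotProduct_mulVec_nonneg (P⁻¹ *ᵥ x)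
      calc (0:ℝ) ≤ (P⁻¹ *ᵥ x) ⬝ᵥ (P *ᵥ (P⁻¹ *ᵥ x)) := h0
        _ = (P⁻¹ *ᵥ x) ⬝ᵥ x := by rw [hx]
        _ = x ⬝ᵥ (P⁻¹ *ᵥ x) := dotProduct_comm _ _
        _ = star x ⬝ᵥ (P⁻¹ *ᵥ x) := by simp
  -- Q = P⁻¹
  have hQP : Q = P⁻¹ := by
    refine psd_eq_of_sq_eq_sq' hQpsd hPinvPsd ?_
    have h2 : P⁻¹ * P⁻¹ = J * Ω := by
      rw [← Matrix.mul_inv_rev, hPP]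
      exact Matrix.inv_eq_right_inv hMN
    rw [pow_two, pow_two, hQQ, h2]
  have hPQ1 : P * Q = 1 := by rw [hQP, hPinv1]
  refine ⟨P, rfl, ?_, ?_⟩
  · -- symplectic
    rw [hPT]
    have h5 : P * (Ω * (P * Ω)) = -1 := by
      have h := hPQ1
      rw [hQdef, mul_neg] at h
      have := congrArg Neg.neg h
      rw [neg_neg] at this
      calc P * (Ω * (P * Ω)) = P * (Ω * P * Ω) := by simp only [mul_assoc]
        _ = -1 := this
    have h6 := congrArg (fun X => X * Ω) h5
    simp only [neg_mul, one_mul] at h6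
    calc P * Ω * P = P * (Ω * (P * (Ω * Ω))) * -1 := by
          rw [hΩ2]; simp [mul_assoc]
      _ = (P * (Ω * (P * Ω)) * Ω) * -1 := by simp only [mul_assoc]
      _ = (-1 * Ω) * -1 := by rw [h5]
      _ = Ω := by simp
  · -- conjugation
    rw [← hQP, hQdef]
    calc P * J * -(Ω * P * Ω) = -(P * (J * Ω) * (P * Ω)) := by
          simp only [mul_neg, neg_mul, mul_assoc]
      _ = -((J * Ω) * P * (P * Ω)) := by rw [hPN]
      _ = -((J * Ω) * ((P * P) * Ω)) := by simp only [mul_assoc]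
      _ = -((J * Ω) * ((Ω * J) * Ω)) := by rw [hPP]
      _ = -(J * ((Ω * Ω) * (J * Ω))) := by simp only [mul_assoc]
      _ = J * (J * Ω) := by rw [hΩ2]; simp
      _ = (J * J) * Ω := by rw [mul_assoc]
      _ = -Ω := by rw [hJ2]; simp
end

section
/- Let ξ be a complex symmetric 2×2 matrix such that Re(ξ) and Im(ξ) are both (positive or negative) semidefinite, or such that det(ξ) = 0. Then for every real symmetric 2×2 matrix H one has Re Tr(ξ H ξ̄ H) ≥ 0. -/
open Matrix

set_option maxRecDepth 10000
set_option maxHeartbeats 2000000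

private lemma quad_psd (α β γ : ℝ) (h : ∀ x y : ℝ, 0 ≤ α*x^2 + 2*β*x*y + γ*y^2) :
    0 ≤ α ∧ 0 ≤ γ ∧ β^2 ≤ α*γ := by
  have hα : 0 ≤ α := by have := h 1 0; linarith
  have hγ : 0 ≤ γ := by have := h 0 1; linarith
  refine ⟨hα, hγ, ?_⟩
  rcases eq_or_lt_of_le hα with h0 | hpos
  · have hb := h (-(β*(γ+1))) (2*β^2)
    rw [← h0] at hb
    have h4 : β^4 = 0 := by
      have hle : β^4 ≤ 0 := by nlinarith [hb]
      have hge : 0 ≤ β^4 := by positivity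
      linarith
    have hβ : β = 0 := by
      have := pow_eq_zero_iff (n := 4) (by norm_num) |>.1 h4
      exact this
    rw [hβ, ← h0]
    nlinarith
  · nlinarith [h β (-α)]

private lemma faux (α β γ p q r : ℝ) (hα : 0 ≤ α) (hγ : 0 ≤ γ) (hd : β^2 ≤ α*γ) :
    0 ≤ α^2*p^2 + γ^2*r^2 + 2*β^2*q^2 + 4*α*β*p*q + 4*β*γ*q*r + 2*α*γ*q^2 + 2*β^2*p*r := by
  rcases eq_or_lt_of_le hα with h0 | hpos
  · have hβ : β = 0 := by nlinarith [sq_nonneg β]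
    rw [hβ, ← h0]
    nlinarith [sq_nonneg (γ*r)]
  · set s := Real.sqrt α with hsdef
    set w := Real.sqrt (α*γ - β^2) with hwdef
    have hs : s^2 = α := Real.sq_sqrt hpos.le
    have hw : w^2 = s^2*γ - β^2 := by rw [hs]; exact Real.sq_sqrt (by linarith)
    have key : s^4 * (α^2*p^2 + γ^2*r^2 + 2*β^2*q^2 + 4*α*β*p*q + 4*β*γ*q*r
        + 2*α*γ*q^2 + 2*β^2*p*r)
        = (p*s^4 + 2*q*β*s^2 + r*β^2)^2 + 2*(w*(q*s^2 + r*β))^2 + (r*w^2)^2 := by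
      rw [← hs]
      linear_combination (-(β^2*r^2) - w^2*r^2 - s^2*γ*r^2 - 4*s^2*β*q*r - 2*s^4*q^2) * hw
    have hs0 : 0 < s := Real.sqrt_pos.2 hpos
    have h4 : (0:ℝ) < s^4 := by positivity
    nlinarith [key, sq_nonneg (p*s^4 + 2*q*β*s^2 + r*β^2), sq_nonneg (w*(q*s^2 + r*β)),
      sq_nonneg (r*w^2), h4]

private lemma fnonneg (α β γ p q r : ℝ) (h : ∀ x y : ℝ, 0 ≤ α*x^2 + 2*β*x*y + γ*y^2) :
    0 ≤ α^2*p^2 + γ^2*r^2 + 2*β^2*q^2 + 4*α*β*p*q + 4*β*γ*q*r + 2*α*γ*q^2 + 2*β^2*p*r := by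
  obtain ⟨hα, hγ, hd⟩ := quad_psd α β γ h
  exact faux α β γ p q r hα hγ hd

/-- For a complex symmetric 2×2 matrix ξ with Re(ξ) and Im(ξ) both (positive or
negative) semidefinite, or with det(ξ) = 0, and any real symmetric 2×2 matrix H,
one has Re Tr(ξ H ξ̄ H) ≥ 0. -/
theorem stmt17 (ξ : Matrix (Fin 2) (Fin 2) ℂ) (hξ : ξᵀ = ξ)
    (hyp : (((ξ.map Complex.re).PosSemidef ∨ (-(ξ.map Complex.re)).PosSemidef) ∧
            ((ξ.map Complex.im).PosSemidef ∨ (-(ξ.map Complex.im)).PosSemidef)) ∨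
           ξ.det = 0)
    (H : Matrix (Fin 2) (Fin 2) ℝ) (hH : Hᵀ = H) :
    0 ≤ ((ξ * H.map Complex.ofReal * ξ.map (starRingEnd ℂ) * H.map Complex.ofReal).trace).re := by
  have h10 : ξ 1 0 = ξ 0 1 := congrFun (congrFun hξ 0) 1
  have hH10 : H 1 0 = H 0 1 := congrFun (congrFun hH 0) 1
  obtain ⟨a1, ha1⟩ : ∃ x, (ξ 0 0).re = x := ⟨_, rfl⟩
  obtain ⟨a2, ha2⟩ : ∃ x, (ξ 0 0).im = x := ⟨_, rfl⟩
  obtain ⟨b1, hb1⟩ : ∃ x, (ξ 0 1).re = x := ⟨_, rfl⟩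
  obtain ⟨b2, hb2⟩ : ∃ x, (ξ 0 1).im = x := ⟨_, rfl⟩
  obtain ⟨c1, hc1⟩ : ∃ x, (ξ 1 1).re = x := ⟨_, rfl⟩
  obtain ⟨c2, hc2⟩ : ∃ x, (ξ 1 1).im = x := ⟨_, rfl⟩
  obtain ⟨p, hp⟩ : ∃ x, H 0 0 = x := ⟨_, rfl⟩
  obtain ⟨q, hq⟩ : ∃ x, H 0 1 = x := ⟨_, rfl⟩
  obtain ⟨r, hr⟩ : ∃ x, H 1 1 = x := ⟨_, rfl⟩
  have hE : ((ξ * H.map Complex.ofReal * ξ.map (starRingEnd ℂ) * H.map Complex.ofReal).trace).re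
      = (a1^2*p^2 + c1^2*r^2 + 2*b1^2*q^2 + 4*a1*b1*p*q + 4*b1*c1*q*r + 2*a1*c1*q^2 + 2*b1^2*p*r)
      + (a2^2*p^2 + c2^2*r^2 + 2*b2^2*q^2 + 4*a2*b2*p*q + 4*b2*c2*q*r + 2*a2*c2*q^2 + 2*b2^2*p*r) := by
    simp only [Matrix.trace_fin_two, Matrix.mul_apply, Fin.sum_univ_two, Matrix.map_apply,
      Complex.add_re, Complex.mul_re, Complex.ofReal_re, Complex.ofReal_im,
      Complex.add_im, Complex.mul_im, h10, hH10,
      Complex.conj_re, Complex.conj_im, ha1, ha2, hb1, hb2, hc1, hc2, hp, hq, hr]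
    ring
  rw [hE]
  rcases hyp with ⟨hre, him⟩ | hdet
  · -- semidefinite case
    have H1 : 0 ≤ a1^2*p^2 + c1^2*r^2 + 2*b1^2*q^2 + 4*a1*b1*p*q + 4*b1*c1*q*r
        + 2*a1*c1*q^2 + 2*b1^2*p*r := by
      rcases hre with h | h
      · refine fnonneg a1 b1 c1 p q r ?_
        intro x y
        have h2 := h.dotProduct_mulVec_nonneg ![x, y]
        simp only [dotProduct, Matrix.mulVec, Fin.sum_univ_two, Matrix.map_apply,
          Pi.star_apply, star_trivial, Matrix.cons_val_zero, Matrix.cons_val_one,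
          Matrix.head_cons, h10, ha1, hb1, hc1] at h2
        nlinarith [h2]
      · have hneg : ∀ x y : ℝ, 0 ≤ (-a1)*x^2 + 2*(-b1)*x*y + (-c1)*y^2 := by
          intro x y
          have h2 := h.dotProduct_mulVec_nonneg ![x, y]
          simp only [dotProduct, Matrix.mulVec, Fin.sum_univ_two, Matrix.map_apply,
            Matrix.neg_apply, Pi.star_apply, star_trivial, Matrix.cons_val_zero,
            Matrix.cons_val_one, Matrix.head_cons, h10, ha1, hb1, hc1] at h2
          nlinarith [h2]
        have := fnonneg (-a1) (-b1) (-c1) p q r hneg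
        nlinarith [this]
    have H2 : 0 ≤ a2^2*p^2 + c2^2*r^2 + 2*b2^2*q^2 + 4*a2*b2*p*q + 4*b2*c2*q*r
        + 2*a2*c2*q^2 + 2*b2^2*p*r := by
      rcases him with h | h
      · refine fnonneg a2 b2 c2 p q r ?_
        intro x y
        have h2 := h.dotProduct_mulVec_nonneg ![x, y]
        simp only [dotProduct, Matrix.mulVec, Fin.sum_univ_two, Matrix.map_apply,
          Pi.star_apply, star_trivial, Matrix.cons_val_zero, Matrix.cons_val_one,
          Matrix.head_cons, h10, ha2, hb2, hc2] at h2
        nlinarith [h2]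
      · have hneg : ∀ x y : ℝ, 0 ≤ (-a2)*x^2 + 2*(-b2)*x*y + (-c2)*y^2 := by
          intro x y
          have h2 := h.dotProduct_mulVec_nonneg ![x, y]
          simp only [dotProduct, Matrix.mulVec, Fin.sum_univ_two, Matrix.map_apply,
            Matrix.neg_apply, Pi.star_apply, star_trivial, Matrix.cons_val_zero,
            Matrix.cons_val_one, Matrix.head_cons, h10, ha2, hb2, hc2] at h2
          nlinarith [h2]
        have := fnonneg (-a2) (-b2) (-c2) p q r hneg
        nlinarith [this]
    linarith
  · -- determinant zero case
    rw [Matrix.det_fin_two, h10] at hdet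
    have hg1 : a1*c1 - a2*c2 - (b1^2 - b2^2) = 0 := by
      have := congrArg Complex.re hdet
      simp only [Complex.sub_re, Complex.mul_re, Complex.zero_re, ha1, ha2, hb1, hb2,
        hc1, hc2] at this
      linarith [this]
    have hg2 : a1*c2 + a2*c1 - 2*b1*b2 = 0 := by
      have := congrArg Complex.im hdet
      simp only [Complex.sub_im, Complex.mul_im, Complex.zero_im, ha1, ha2, hb1, hb2,
        hc1, hc2] at this
      linarith [this]
    by_cases haz : a1^2 + a2^2 = 0
    · have ha10 : a1 = 0 := by nlinarith [sq_nonneg a1, sq_nonneg a2]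
      have ha20 : a2 = 0 := by nlinarith [sq_nonneg a1, sq_nonneg a2]
      rw [ha10, ha20] at hg1 hg2
      have hb14 : b1^4 = 0 := by nlinarith [hg1, hg2, sq_nonneg b1, sq_nonneg b2]
      have hb10 : b1 = 0 := pow_eq_zero_iff (n := 4) (by norm_num) |>.1 hb14
      have hb20 : b2 = 0 := by
        rw [hb10] at hg1
        have : b2^2 = 0 := by nlinarith [hg1]
        exact pow_eq_zero_iff (n := 2) (by norm_num) |>.1 this
      rw [ha10, ha20, hb10, hb20]
      nlinarith [sq_nonneg (c1*r), sq_nonneg (c2*r)]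
    · have hpos : 0 < a1^2 + a2^2 := lt_of_le_of_ne (by positivity) (Ne.symm haz)
      have key : (a1^2 + a2^2) *
          ((a1^2*p^2 + c1^2*r^2 + 2*b1^2*q^2 + 4*a1*b1*p*q + 4*b1*c1*q*r + 2*a1*c1*q^2 + 2*b1^2*p*r)
          + (a2^2*p^2 + c2^2*r^2 + 2*b2^2*q^2 + 4*a2*b2*p*q + 4*b2*c2*q*r + 2*a2*c2*q^2 + 2*b2^2*p*r))
          = ((a1^2 + a2^2)*p + (b1^2 + b2^2)*r + 2*(a1*b1 + a2*b2)*q)^2 := by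
        linear_combination
          (-(b2^2*r^2) + b1^2*r^2 - a2*c2*r^2 - 4*a2*b2*q*r - 2*a2^2*q^2 + a1*c1*r^2
            + 4*a1*b1*q*r + 2*a1^2*q^2) * hg1
          + (2*b1*b2*r^2 + a2*c1*r^2 + 4*a2*b1*q*r + a1*c2*r^2 + 4*a1*b2*q*r + 4*a1*a2*q^2) * hg2
      nlinarith [key, sq_nonneg ((a1^2 + a2^2)*p + (b1^2 + b2^2)*r + 2*(a1*b1 + a2*b2)*q), hpos]
end

section
/- Define R(δ⁺, δ⁻) for 0 ≤ δ⁻ ≤ δ⁺ with δ⁺ + δ⁻ < 1 via its partial derivative -D₂R·δ⁺δ⁻ = δ⁺δ⁻ / (2(√(1-δ⁺)+√(1-δ⁻))(1+√(1-δ⁺))(1+√(1-δ⁻))). Then whenever δ⁺ + δ⁻ < 1 one has the strict bound δ⁺δ⁻ / (2(√(1-δ⁺)+√(1-δ⁻))(1+√(1-δ⁺))(1+√(1-δ⁻))) < 1/6. -/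
/-- For 0 ≤ δ⁻ ≤ δ⁺ with δ⁺ + δ⁻ < 1:
δ⁺δ⁻ / (2(√(1-δ⁺)+√(1-δ⁻))(1+√(1-δ⁺))(1+√(1-δ⁻))) < 1/6. -/
theorem stmt18 (dp dm : ℝ) (h1 : 0 ≤ dm) (h2 : dm ≤ dp) (h3 : dp + dm < 1) :
    dp * dm / (2 * (Real.sqrt (1 - dp) + Real.sqrt (1 - dm)) *
      (1 + Real.sqrt (1 - dp)) * (1 + Real.sqrt (1 - dm))) < 1 / 6 := by
  set a := Real.sqrt (1 - dp) with ha_def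
  set b := Real.sqrt (1 - dm) with hb_def
  have hdp : dp < 1 := by linarith
  have ha2 : a ^ 2 = 1 - dp := Real.sq_sqrt (by linarith)
  have hb2 : b ^ 2 = 1 - dm := Real.sq_sqrt (by linarith)
  have ha : 0 < a := Real.sqrt_pos.mpr (by linarith)
  have hb : 0 < b := by
    have := Real.sqrt_le_sqrt (by linarith : 1 - dp ≤ 1 - dm)
    linarith
  have hab : a ≤ b := Real.sqrt_le_sqrt (by linarith)
  have hb1 : b ≤ 1 := by
    have := Real.sqrt_le_sqrt (by linarith : 1 - dm ≤ 1)
    rwa [Real.sqrt_one] at this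
  have ha1 : a ≤ 1 := le_trans hab hb1
  have hsum : a ^ 2 + b ^ 2 > 1 := by rw [ha2, hb2]; linarith
  have hs : 1 < a + b := by nlinarith [mul_pos ha hb]
  have hD : 0 < 2 * (a + b) * (1 + a) * (1 + b) := by positivity
  rw [div_lt_iff₀ hD]
  have key : 3 * (1 - a) * (1 - b) < a + b := by
    nlinarith [mul_nonneg (by linarith : (0:ℝ) ≤ a + b - 1)
      (by linarith : (0:ℝ) ≤ 2 - a - b)]
  nlinarith [mul_pos (by linarith : (0:ℝ) < 1 + a) (by linarith : (0:ℝ) < 1 + b),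
    mul_pos (mul_pos (by linarith : (0:ℝ) < 1 + a) (by linarith : (0:ℝ) < 1 + b))
      (by linarith : (0:ℝ) < a + b - 3 * (1 - a) * (1 - b))]
end

section
/- Let G be a real symmetric positive-definite n×n matrix and Φ a complex symmetric n×n matrix such that all eigenvalues of G⁻¹ Φ G⁻¹ Φ̄ have modulus less than 1. Then the matrix (1 - G⁻¹ Φ G⁻¹ Φ̄)^{1/2} G⁻¹ is Hermitian and positive-definite, where the square root is defined via the similarity (1 - G⁻¹ Φ G⁻¹ Φ̄) = S⁻¹(1 - R R̄)S with R = Λ^{1/2} S Φ Sᵀ Λ^{1/2} for G⁻¹ = Sᵀ Λ S an orthogonal diagonalization. -/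
open Matrix
open scoped ComplexOrder

section Helpers
variable {n : ℕ}

lemma posDef_of_posSemidef_isUnit {A : Matrix (Fin n) (Fin n) ℂ}
    (hA : A.PosSemidef) (hU : IsUnit A) : A.PosDef := by
  refine PosDef.of_dotProduct_mulVec_pos hA.1 fun x hx => ?_
  have h1 : 0 ≤ star x ⬝ᵥ A *ᵥ x := hA.dotProduct_mulVec_nonneg x
  rcases h1.lt_or_eq with h | h
  · exact h
  · exfalso
    have h2 : A *ᵥ x = 0 := (hA.dotProduct_mulVec_zero_iff x).mp h.symm
    have h3 : Function.Injective (A.mulVec) := mulVec_injective_iff_isUnit.mpr hU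
    exact hx (h3 (by simpa using h2))

lemma posDef_of_eigenvalues_pos {A : Matrix (Fin n) (Fin n) ℂ}
    (hA : A.IsHermitian) (h : ∀ i, 0 < hA.eigenvalues i) : A.PosDef := by
  refine posDef_of_posSemidef_isUnit
    (hA.posSemidef_iff_eigenvalues_nonneg.mpr fun i => (h i).le) ?_
  rw [Matrix.isUnit_iff_isUnit_det, hA.det_eq_prod_eigenvalues]
  refine (Finset.prod_ne_zero_iff.mpr fun i _ => ?_).isUnit
  simpa using (h i).ne'

lemma posDef_conj {A B : Matrix (Fin n) (Fin n) ℂ} (hA : A.PosDef) (hB : IsUnit B) :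
    (Bᴴ * A * B).PosDef := by
  refine PosDef.of_dotProduct_mulVec_pos (isHermitian_conjTranspose_mul_mul B hA.1) fun x hx => ?_
  have hBx : B *ᵥ x ≠ 0 := fun h =>
    hx ((mulVec_injective_iff_isUnit.mpr hB) (by simpa using h))
  have := hA.dotProduct_mulVec_pos hBx
  rwa [star_mulVec, mulVec_mulVec, ← dotProduct_mulVec, mulVec_mulVec, ← mul_assoc] at this

lemma isUnit_conj_iff {A P : Matrix (Fin n) (Fin n) ℂ} (hP : IsUnit P) :
    IsUnit (P⁻¹ * A * P) ↔ IsUnit A := by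
  have h1 : P * P⁻¹ = 1 := mul_nonsing_inv _ (isUnit_iff_isUnit_det _ |>.mp hP)
  have h2 : P⁻¹ * P = 1 := nonsing_inv_mul _ (isUnit_iff_isUnit_det _ |>.mp hP)
  constructor
  · intro h
    have : A = P * (P⁻¹ * A * P) * P⁻¹ := by
      calc A = (P * P⁻¹) * A * (P * P⁻¹) := by rw [h1]; simp
      _ = P * (P⁻¹ * A * P) * P⁻¹ := by noncomm_ring
    rw [this]
    exact (hP.mul h).mul (isUnit_nonsing_inv_iff.mpr hP)
  · intro h
    exact ((isUnit_nonsing_inv_iff.mpr hP).mul h).mul hP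

lemma spectrum_mul_comm {P Q : Matrix (Fin n) (Fin n) ℂ} (hP : IsUnit P) :
    spectrum ℂ (Q * P) = spectrum ℂ (P * Q) := by
  ext μ
  simp only [spectrum.mem_iff, not_iff_not]
  have key : (algebraMap ℂ _ μ) - Q * P = P⁻¹ * ((algebraMap ℂ _ μ) - P * Q) * P := by
    have h2 : P⁻¹ * P = 1 := nonsing_inv_mul _ (isUnit_iff_isUnit_det _ |>.mp hP)
    simp [mul_sub, sub_mul, mul_assoc]
    rw [← mul_assoc, Algebra.algebraMap_eq_smul_one]
    simp [Matrix.smul_mul, Matrix.mul_smul, h2, ← mul_assoc]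
  rw [key, isUnit_conj_iff hP]

end Helpers

/-- For G real symmetric positive-definite with orthogonal diagonalization
G⁻¹ = Sᵀ Λ S (Λ = diag(d), d > 0) and Φ complex symmetric with all eigenvalues of
G⁻¹ Φ G⁻¹ Φ̄ of modulus < 1, setting R = Λ^{1/2} S Φ Sᵀ Λ^{1/2}, the matrix
1 - R R̄ is Hermitian positive-definite, and
(1 - G⁻¹ΦG⁻¹Φ̄)^{1/2} G⁻¹ := Sᵀ Λ^{1/2} (1-RR̄)^{1/2} Λ^{1/2} S is Hermitian
positive-definite and squares (against G) to 1 - G⁻¹ΦG⁻¹Φ̄. -/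
theorem stmt19 (n : ℕ) (G S : Matrix (Fin n) (Fin n) ℝ) (d : Fin n → ℝ)
    (Φ : Matrix (Fin n) (Fin n) ℂ)
    (hG : G.PosDef) (hΦ : Φᵀ = Φ)
    (hS : Sᵀ * S = 1) (hd : ∀ i, 0 < d i)
    (hdiag : G⁻¹ = Sᵀ * Matrix.diagonal d * S)
    (hspec : ∀ μ ∈ spectrum ℂ ((G.map Complex.ofReal)⁻¹ * Φ * (G.map Complex.ofReal)⁻¹ *
        Φ.map (starRingEnd ℂ)), ‖μ‖ < 1) :
    let Sc : Matrix (Fin n) (Fin n) ℂ := S.map Complex.ofReal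
    let Λh : Matrix (Fin n) (Fin n) ℂ := Matrix.diagonal fun i => (Real.sqrt (d i) : ℂ)
    let R : Matrix (Fin n) (Fin n) ℂ := Λh * Sc * Φ * Scᵀ * Λh
    (1 - R * R.map (starRingEnd ℂ)).IsHermitian ∧
    ∃ T : Matrix (Fin n) (Fin n) ℂ, T.PosDef ∧
      T * T = 1 - R * R.map (starRingEnd ℂ) ∧
      (Scᵀ * Λh * T * Λh * Sc).PosDef ∧
      (Scᵀ * Λh * T * Λh * Sc) * G.map Complex.ofReal *
          (Scᵀ * Λh * T * Λh * Sc) * G.map Complex.ofReal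
        = 1 - (G.map Complex.ofReal)⁻¹ * Φ * (G.map Complex.ofReal)⁻¹ *
            Φ.map (starRingEnd ℂ) := by
  intro Sc Λh R
  set Gc : Matrix (Fin n) (Fin n) ℂ := G.map Complex.ofReal with hGc
  set Φb : Matrix (Fin n) (Fin n) ℂ := Φ.map (starRingEnd ℂ) with hΦb
  set Λhinv : Matrix (Fin n) (Fin n) ℂ :=
    Matrix.diagonal fun i => ((Real.sqrt (d i))⁻¹ : ℂ) with hΛhinv
  have mmulR : ∀ A B : Matrix (Fin n) (Fin n) ℝ,
      (A * B).map Complex.ofReal = A.map Complex.ofReal * B.map Complex.ofReal :=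
    fun A B => Matrix.map_mul (f := Complex.ofRealHom)
  have moneR : (1 : Matrix (Fin n) (Fin n) ℝ).map Complex.ofReal = 1 :=
    Matrix.map_one Complex.ofReal Complex.ofReal_zero Complex.ofReal_one
  have sqrt_ne : ∀ i, (Real.sqrt (d i) : ℂ) ≠ 0 := fun i => by
    simpa using (Real.sqrt_pos.mpr (hd i)).ne'
  -- orthogonality over ℂ
  have hScSc : Scᵀ * Sc = 1 := by
    have h2 := congrArg (fun M : Matrix (Fin n) (Fin n) ℝ => M.map Complex.ofReal) hS
    simp only [mmulR, moneR, Matrix.transpose_map] at h2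
    exact h2
  have hSSc : Sc * Scᵀ = 1 := mul_eq_one_comm.mp hScSc
  -- diagonal identities
  have hΛhΛhinv : Λh * Λhinv = 1 := by
    rw [hΛhinv]
    show (Matrix.diagonal fun i => (Real.sqrt (d i) : ℂ)) * _ = _
    rw [diagonal_mul_diagonal,
      show (fun i => (Real.sqrt (d i) : ℂ) * ((Real.sqrt (d i))⁻¹ : ℂ)) = fun _ => (1:ℂ) from
        funext fun i => mul_inv_cancel₀ (sqrt_ne i), diagonal_one]
  have hΛhinvΛh : Λhinv * Λh = 1 := mul_eq_one_comm.mp hΛhΛhinv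
  -- G⁻¹ and G over ℂ
  have hGunit : IsUnit G := hG.isUnit
  have hGGinv : Gc * (Scᵀ * (Λh * (Λh * Sc))) = 1 := by
    have h1 : G * G⁻¹ = 1 := mul_nonsing_inv _ (isUnit_iff_isUnit_det _ |>.mp hGunit)
    rw [hdiag] at h1
    have h2 := congrArg (fun M : Matrix (Fin n) (Fin n) ℝ => M.map Complex.ofReal) h1
    simp only [mmulR, moneR] at h2
    have hΛmap : (Matrix.diagonal d).map Complex.ofReal = Λh * Λh := by
      have hdd : Λh * Λh = Matrix.diagonal (Complex.ofReal ∘ d) := by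
        show (Matrix.diagonal fun i => (Real.sqrt (d i) : ℂ)) *
          (Matrix.diagonal fun i => (Real.sqrt (d i) : ℂ)) = _
        rw [diagonal_mul_diagonal]
        exact congrArg Matrix.diagonal (funext fun i => by
          simp [← Complex.ofReal_mul, Real.mul_self_sqrt (hd i).le])
      rw [hdd, Matrix.diagonal_map (by simp)]
      rfl
    rw [hΛmap] at h2
    calc Gc * (Scᵀ * (Λh * (Λh * Sc)))
        = Gc * ((Sᵀ).map Complex.ofReal * (Λh * Λh) * Sc) := by
          rw [Matrix.transpose_map]; simp only [mul_assoc]; rfl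
      _ = 1 := h2
  have hGcUnit : IsUnit Gc :=
    ⟨⟨Gc, _, hGGinv, mul_eq_one_comm.mp hGGinv⟩, rfl⟩
  have hGinv : Gc⁻¹ = Scᵀ * (Λh * (Λh * Sc)) := inv_eq_right_inv hGGinv
  have hGcEq : Gc = Scᵀ * (Λhinv * (Λhinv * Sc)) := by
    have hX : (Scᵀ * (Λh * (Λh * Sc))) * (Scᵀ * (Λhinv * (Λhinv * Sc))) = 1 := by
      calc (Scᵀ * (Λh * (Λh * Sc))) * (Scᵀ * (Λhinv * (Λhinv * Sc)))
          = Scᵀ * (Λh * ((Λh * ((Sc * Scᵀ) * Λhinv)) * (Λhinv * Sc))) := by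
            simp only [mul_assoc]
        _ = Scᵀ * (Λh * ((Λh * Λhinv) * (Λhinv * Sc))) := by rw [hSSc, one_mul]
        _ = Scᵀ * (Λh * (Λhinv * Sc)) := by rw [hΛhΛhinv, one_mul]
        _ = Scᵀ * ((Λh * Λhinv) * Sc) := by simp only [mul_assoc]
        _ = 1 := by rw [hΛhΛhinv, one_mul, hScSc]
    calc Gc = Gc * ((Scᵀ * (Λh * (Λh * Sc))) * (Scᵀ * (Λhinv * (Λhinv * Sc)))) := by
          rw [hX, mul_one]
      _ = (Gc * (Scᵀ * (Λh * (Λh * Sc)))) * (Scᵀ * (Λhinv * (Λhinv * Sc))) := by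
          simp only [mul_assoc]
      _ = Scᵀ * (Λhinv * (Λhinv * Sc)) := by rw [hGGinv, one_mul]
  -- symmetry of R and the conjugate
  have hR : R = Λh * Sc * Φ * Scᵀ * Λh := rfl
  have hΛhT : Λhᵀ = Λh := Matrix.diagonal_transpose _
  have hRsymm : Rᵀ = R := by
    rw [hR]
    simp only [Matrix.transpose_mul, Matrix.transpose_transpose, hΛhT, hΦ, mul_assoc]
  have hScConj : Sc.map (starRingEnd ℂ) = Sc := by
    ext i j
    show (starRingEnd ℂ) ((S.map Complex.ofReal) i j) = (S.map Complex.ofReal) i j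
    simp [Matrix.map_apply, Complex.conj_ofReal]
  have hScTConj : Scᵀ.map (starRingEnd ℂ) = Scᵀ := by
    rw [Matrix.transpose_map, hScConj]
  have hΛhConj : Λh.map (starRingEnd ℂ) = Λh := by
    show (Matrix.diagonal fun i => (Real.sqrt (d i) : ℂ)).map (starRingEnd ℂ) = _
    rw [Matrix.diagonal_map (by simp)]
    exact congrArg Matrix.diagonal (funext fun i => Complex.conj_ofReal _)
  have mmulC : ∀ A B : Matrix (Fin n) (Fin n) ℂ,
      (A * B).map (starRingEnd ℂ) = A.map (starRingEnd ℂ) * B.map (starRingEnd ℂ) :=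
    fun A B => Matrix.map_mul (f := starRingEnd ℂ)
  have hRb : R.map (starRingEnd ℂ) = Λh * Sc * Φb * Scᵀ * Λh := by
    rw [hR, mmulC, mmulC, mmulC, mmulC, hΛhConj, hScConj, hScTConj, hΦb]
  -- Hermitian of 1 - R R̄
  have hRji : ∀ i j, R j i = R i j := fun i j =>
    calc R j i = Rᵀ i j := rfl
      _ = R i j := by rw [hRsymm]
  have hRH : Rᴴ = R.map (starRingEnd ℂ) := by
    ext i j
    show star (R j i) = (starRingEnd ℂ) (R i j)
    rw [hRji i j]
    rfl
  have hRbH : (R.map (starRingEnd ℂ))ᴴ = R := by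
    ext i j
    show star ((starRingEnd ℂ) (R j i)) = R i j
    rw [hRji i j]
    exact star_star _
  have hHerm : (1 - R * R.map (starRingEnd ℂ)).IsHermitian := by
    show (1 - R * R.map (starRingEnd ℂ))ᴴ = _
    rw [conjTranspose_sub, conjTranspose_one, conjTranspose_mul, hRH, hRbH]
  refine ⟨hHerm, ?_⟩
  -- spectrum of R R̄
  set H : Matrix (Fin n) (Fin n) ℂ := R * R.map (starRingEnd ℂ) with hHdef
  have hspecH : ∀ μ ∈ spectrum ℂ H, ‖μ‖ < 1 := by
    intro μ hμ
    apply hspec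
    set P : Matrix (Fin n) (Fin n) ℂ := Scᵀ * Λh with hPdef
    set Q : Matrix (Fin n) (Fin n) ℂ := Λh * Sc * Φ * Gc⁻¹ * Φb with hQdef
    have hPunit : IsUnit P := by
      have h1 : P * (Λhinv * Sc) = 1 := by
        calc P * (Λhinv * Sc) = Scᵀ * ((Λh * Λhinv) * Sc) := by
              rw [hPdef]; simp only [mul_assoc]
          _ = 1 := by rw [hΛhΛhinv, one_mul, hScSc]
      exact ⟨⟨P, _, h1, mul_eq_one_comm.mp h1⟩, rfl⟩
    have hQP : Q * P = R * R.map (starRingEnd ℂ) := by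
      rw [hQdef, hPdef, hR, hRb, hGinv]
      simp only [mul_assoc]
    have hPQ : P * Q = Gc⁻¹ * Φ * Gc⁻¹ * Φb := by
      rw [hQdef, hPdef, hGinv]
      simp only [mul_assoc]
    rw [hHdef] at hμ
    rw [← hQP] at hμ
    rw [spectrum_mul_comm hPunit, hPQ] at hμ
    exact hμ
  -- positivity of 1 - H
  have hHerm' : (1 - H).IsHermitian := hHerm
  have hPos : (1 - H).PosDef := by
    apply posDef_of_eigenvalues_pos hHerm'
    intro i
    set t : ℝ := hHerm'.eigenvalues i with ht
    have m1 : (t : ℂ) ∈ spectrum ℂ (1 - H) := by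
      have h0 : t ∈ spectrum ℝ (1 - H) := hHerm'.eigenvalues_mem_spectrum_real i
      have := spectrum.algebraMap_mem ℂ h0
      simpa using this
    have m2 : (1 - (t : ℂ)) ∈ spectrum ℂ H := by
      rw [spectrum.mem_iff] at m1 ⊢
      intro hu
      apply m1
      have : algebraMap ℂ (Matrix (Fin n) (Fin n) ℂ) (t : ℂ) - (1 - H) =
          -(algebraMap ℂ (Matrix (Fin n) (Fin n) ℂ) (1 - (t:ℂ)) - H) := by
        simp only [Algebra.algebraMap_eq_smul_one, sub_smul, one_smul]
        abel
      rw [this]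
      exact hu.neg
    have habs := hspecH _ m2
    have : ‖(1 - (t:ℂ))‖ = |1 - t| := by
      rw [show (1 - (t:ℂ)) = ((1 - t : ℝ) : ℂ) by push_cast; ring]
      rw [Complex.norm_real, Real.norm_eq_abs]
    rw [this] at habs
    have := abs_lt.mp habs
    linarith [this.1, this.2]
  -- the square root
  set T : Matrix (Fin n) (Fin n) ℂ := (open scoped MatrixOrder in CFC.sqrt (1 - H)) with hTdef
  have hTps : T.PosSemidef :=
    open scoped MatrixOrder in Matrix.nonneg_iff_posSemidef.mp (CFC.sqrt_nonneg _)
  have hTT : T * T = 1 - H :=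
    open scoped MatrixOrder in
    CFC.sqrt_mul_sqrt_self (1 - H) (Matrix.nonneg_iff_posSemidef.mpr hPos.posSemidef)
  have hTunit : IsUnit T := by
    rw [Matrix.isUnit_iff_isUnit_det]
    have hdet : T.det * T.det = (1 - H).det := by rw [← det_mul, hTT]
    have h1 : (1 - H).det ≠ 0 := hPos.det_pos.ne'
    have : T.det ≠ 0 := fun h => h1 (by rw [← hdet, h, mul_zero])
    exact this.isUnit
  have hTpos : T.PosDef := posDef_of_posSemidef_isUnit hTps hTunit
  refine ⟨T, hTpos, hTT, ?_, ?_⟩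
  -- positive definiteness of M
  · have hBunit : IsUnit (Λh * Sc) := by
      have h1 : (Λh * Sc) * (Scᵀ * Λhinv) = 1 := by
        calc (Λh * Sc) * (Scᵀ * Λhinv) = Λh * ((Sc * Scᵀ) * Λhinv) := by noncomm_ring
          _ = 1 := by rw [hSSc, one_mul, hΛhΛhinv]
      exact ⟨⟨_, _, h1, mul_eq_one_comm.mp h1⟩, rfl⟩
    have hScH : Scᴴ = Scᵀ := by
      ext i j
      show star ((S.map Complex.ofReal) j i) = (S.map Complex.ofReal) j i
      simp [Matrix.map_apply, Complex.conj_ofReal]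
    have hΛhH : Λhᴴ = Λh := by
      have h1 : Λhᴴ = (Matrix.diagonal fun i => (Real.sqrt (d i) : ℂ))ᴴ := rfl
      rw [h1, Matrix.diagonal_conjTranspose]
      exact congrArg Matrix.diagonal (funext fun i => by
        simp [Pi.star_apply, Complex.conj_ofReal])
    have hBH : (Λh * Sc)ᴴ = Scᵀ * Λh := by
      rw [conjTranspose_mul, hScH, hΛhH]
    have := posDef_conj hTpos hBunit
    rw [hBH] at this
    have heq : Scᵀ * Λh * T * (Λh * Sc) = Scᵀ * Λh * T * Λh * Sc := by
      simp only [mul_assoc]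
    rwa [heq] at this
  -- the main identity
  · have r1 : ∀ X : Matrix (Fin n) (Fin n) ℂ, Sc * (Scᵀ * X) = X := fun X => by
      rw [← mul_assoc, hSSc, one_mul]
    have r2 : ∀ X : Matrix (Fin n) (Fin n) ℂ, Scᵀ * (Sc * X) = X := fun X => by
      rw [← mul_assoc, hScSc, one_mul]
    have r4 : ∀ X : Matrix (Fin n) (Fin n) ℂ, Λhinv * (Λh * X) = X := fun X => by
      rw [← mul_assoc, hΛhinvΛh, one_mul]
    have r5 : ∀ X : Matrix (Fin n) (Fin n) ℂ, Λh * (Λhinv * X) = X := fun X => by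
      rw [← mul_assoc, hΛhΛhinv, one_mul]
    have r6 : ∀ X : Matrix (Fin n) (Fin n) ℂ, T * (T * X) = X - R * (R.map (starRingEnd ℂ) * X) :=
      fun X => by
        rw [← mul_assoc, hTT, hHdef, sub_mul, one_mul, mul_assoc]
    rw [hGinv, hGcEq]
    simp only [mul_assoc, r1, r2, r4, r5, r6, hR, mmulC, hΛhConj, hScConj, hScTConj, hΦb.symm,
      mul_sub, sub_mul, mul_one, one_mul, hScSc, hSSc, hΛhΛhinv, hΛhinvΛh]
end
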